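/- Fix n ≥ 2 and a partition (a,b) of {1,...,n} with k blocks (so n-k arcs, n-k ≥ 1). Summing the expression d·(n-d-1)!·(k-1)!/((n-k-1)!·(k-d)!) over d = 1, ..., k yields n!/(n-k+1)!. -/

import Mathlib

open Finset Nat

/-- Hockey stick identity. -/
lemma stmt15_hs (m : ℕ) : ∀ r : ℕ, ∑ j ∈ range (r + 1), (m + j).choose j = (m + r + 1).choose r := by
  intro r
  induction r with
  | zero => simp
  | succ r ih =>
    rw [Finset.sum_range_succ, ih]
    rw [show m + (r + 1) = m + r + 1 from by omega, Nat.choose_succ_succ (m + r + 1) r]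

lemma stmt15_key (m : ℕ) : ∀ k : ℕ,
    ∑ j ∈ range (k + 1), (k + 1 - j) * (m + j).choose j = (m + k + 2).choose k := by
  intro k
  induction k with
  | zero => simp
  | succ k ih =>
    have split : ∀ j ∈ range (k + 2), (k + 2 - j) * (m + j).choose j
        = (m + j).choose j + (k + 1 - j) * (m + j).choose j := by
      intro j hj
      rw [Finset.mem_range] at hj
      have : k + 2 - j = 1 + (k + 1 - j) := by omega
      rw [this, add_mul, one_mul]
    rw [Finset.sum_congr rfl split, Finset.sum_add_distrib]
    have h1 : ∑ j ∈ range (k + 2), (m + j).choose j = (m + (k + 1) + 1).choose (k + 1) :=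
      stmt15_hs m (k + 1)
    have h2 : ∑ j ∈ range (k + 2), (k + 1 - j) * (m + j).choose j
        = ∑ j ∈ range (k + 1), (k + 1 - j) * (m + j).choose j := by
      rw [Finset.sum_range_succ]
      simp
    rw [h1, h2, ih]
    rw [show m + (k + 1) + 1 = m + k + 2 from by omega,
        show m + (k + 1) + 2 = m + k + 2 + 1 from by omega,
        Nat.choose_succ_succ (m + k + 2) k]
    exact Nat.add_comm _ _

/-- for 1 ≤ k ≤ n-1 (the number of blocks of a ceiling partition with at
least one arc), Σ_{d=1}^k d (n-d-1)! (k-1)! / ((n-k-1)! (k-d)!) = n!/(n-k+1)!. -/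
theorem stmt15 (n k : ℕ) (hn : 2 ≤ n) (hk1 : 1 ≤ k) (hk : k ≤ n - 1) :
    ∑ d ∈ Icc 1 k, d * (n - d - 1)! * (k - 1)! / ((n - k - 1)! * (k - d)!) =
      n ! / (n - k + 1)! := by
  -- rewrite each term as d * choose * (k-1)!
  have hterm : ∀ d ∈ Icc 1 k, d * (n - d - 1)! * (k - 1)! / ((n - k - 1)! * (k - d)!)
      = d * ((n - d - 1).choose (k - d)) * (k - 1)! := by
    intro d hd
    rw [Finset.mem_Icc] at hd
    have hle : k - d ≤ n - d - 1 := by omega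
    have hfac := Nat.choose_mul_factorial_mul_factorial hle
    have he : n - d - 1 - (k - d) = n - k - 1 := by omega
    rw [he] at hfac
    have : d * (n - d - 1)! * (k - 1)!
        = d * ((n - d - 1).choose (k - d)) * (k - 1)! * ((n - k - 1)! * (k - d)!) := by
      rw [← hfac]; ring
    rw [this, Nat.mul_div_cancel _ (Nat.mul_pos (Nat.factorial_pos _) (Nat.factorial_pos _))]
  rw [Finset.sum_congr rfl hterm, ← Finset.sum_mul]
  -- rewrite RHS
  have hle2 : k - 1 ≤ n := by omega
  have hfac2 := Nat.choose_mul_factorial_mul_factorial hle2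
  have he2 : n - (k - 1) = n - k + 1 := by omega
  rw [he2] at hfac2
  have hrhs : n ! / (n - k + 1)! = n.choose (k - 1) * (k - 1)! := by
    rw [← hfac2, Nat.mul_div_cancel _ (Nat.factorial_pos _)]
  rw [hrhs]
  congr 1
  -- reindex: Icc 1 k → range k
  rw [← Finset.Ico_add_one_right_eq_Icc, Finset.sum_Ico_eq_sum_range]
  rw [show k + 1 - 1 = k from by omega]
  rw [← Finset.sum_range_reflect]
  have hcong : ∀ j ∈ range k, (1 + (k - 1 - j)) * ((n - (1 + (k - 1 - j)) - 1).choose (k - (1 + (k - 1 - j))))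
      = (k - j) * ((n - k - 1 + j).choose j) := by
    intro j hj
    rw [Finset.mem_range] at hj
    have e1 : 1 + (k - 1 - j) = k - j := by omega
    have e2 : n - (k - j) - 1 = n - k - 1 + j := by omega
    have e3 : k - (k - j) = j := by omega
    rw [e1, e2, e3]
  rw [Finset.sum_congr rfl hcong]
  -- apply key lemma with k = (k-1)+1
  have hkey := stmt15_key (n - k - 1) (k - 1)
  rw [show k - 1 + 1 = k from by omega, show n - k - 1 + (k - 1) + 2 = n from by omega] at hkey
  exact hkey
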